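/- Fix a > 0 and define G : (-∞,-1) → ℝ by G(z) = (z² - φ(z)²)/2 + (1+a)(z - φ(z)). Then G is differentiable on (-∞,-1) and its derivative factorizes as G'(z) = ((z - φ(z)) / (z(φ(z)+1))) · ((z+1)(φ(z)+1) + a). In particular, G'(z) = 0 if and only if (z+1)(φ(z)+1) + a = 0. -/

import Mathlib

open Real Filter Topology

private lemma fmono : StrictMonoOn (fun w : ℝ => w * Real.exp w) (Set.Ici (-1 : ℝ)) := by
  apply strictMonoOn_of_deriv_pos (convex_Ici _)
  · exact (continuous_id.mul Real.continuous_exp).continuousOn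
  · intro w hw
    rw [interior_Ici] at hw
    have h : HasDerivAt (fun w : ℝ => w * Real.exp w) (1 * Real.exp w + w * Real.exp w) w :=
      (hasDerivAt_id w).mul (Real.hasDerivAt_exp w)
    rw [h.deriv]
    have := Real.exp_pos w
    have : (-1 : ℝ) < w := hw
    nlinarith [Real.exp_pos w]

private lemma phi_deriv (φ : ℝ → ℝ)
    (hφ : ∀ z : ℝ, z < -1 → φ z ∈ Set.Ioo (-1 : ℝ) 0 ∧ φ z * Real.exp (φ z) = z * Real.exp z)
    (z : ℝ) (hz : z < -1) :
    HasDerivAt φ ((1 + z) * φ z / (z * (1 + φ z))) z := by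
  obtain ⟨hw, heq⟩ := hφ z hz
  set w := φ z with hwdef
  have hw1 : (-1 : ℝ) < w := hw.1
  have hw0 : w < 0 := hw.2
  have hwne : w ≠ 0 := ne_of_lt hw0
  have hzne : z ≠ 0 := by linarith
  have h1w : (1 : ℝ) + w ≠ 0 := by linarith
  set f : ℝ → ℝ := fun x => x * Real.exp x with hfdef
  have hfd : ∀ x : ℝ, HasStrictDerivAt f ((1 + x) * Real.exp x) x := by
    intro x
    have := (hasStrictDerivAt_id x).fun_mul (Real.hasStrictDerivAt_exp x)
    refine this.congr_deriv (Eq.symm ?_)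
    simp only [id_eq]
    ring
  have hf'ne : (1 + w) * Real.exp w ≠ 0 :=
    mul_ne_zero h1w (Real.exp_ne_zero w)
  have hf := hfd w
  set g := hf.localInverse f _ w hf'ne with hgdef
  have hgd : HasStrictDerivAt g ((1 + w) * Real.exp w)⁻¹ (f w) := hf.to_localInverse hf'ne
  have hfw : f w = z * Real.exp z := heq
  -- eventually facts near f w
  have hright : ∀ᶠ y in 𝓝 (f w), f (g y) = y :=
    (hf.hasStrictFDerivAt_equiv hf'ne).eventually_right_inverse
  have hgw : g (f w) = w :=
    (hf.hasStrictFDerivAt_equiv hf'ne).localInverse_apply_image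
  have hgcont : Filter.Tendsto g (𝓝 (f w)) (𝓝 w) := by
    have := hgd.hasDerivAt.continuousAt
    rwa [ContinuousAt, hgw] at this
  have hgIoo : ∀ᶠ y in 𝓝 (f w), g y ∈ Set.Ioo (-1 : ℝ) 0 :=
    hgcont (Ioo_mem_nhds hw1 hw0)
  -- the map z ↦ z e^z tends to f w at z
  have hzf : Filter.Tendsto (fun x : ℝ => x * Real.exp x) (𝓝 z) (𝓝 (f w)) := by
    rw [hfw]
    exact (continuous_id.mul Real.continuous_exp).continuousAt
  have hev : ∀ᶠ x in 𝓝 z, φ x = g (x * Real.exp x) := by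
    have h1 : ∀ᶠ x in 𝓝 z, x < -1 := Filter.Tendsto.eventually_lt_const hz tendsto_id
    have h2 := hzf.eventually hright
    have h3 := hzf.eventually hgIoo
    filter_upwards [h1, h2, h3] with x hx1 hx2 hx3
    obtain ⟨hwx, heqx⟩ := hφ x hx1
    apply fmono.injOn (Set.mem_of_mem_of_subset hwx (by
      intro t ht; exact le_of_lt ht.1)) (Set.mem_of_mem_of_subset hx3 (by
      intro t ht; exact le_of_lt ht.1))
    show f (φ x) = f (g (x * Real.exp x))
    rw [hx2]
    exact heqx
  have hcomp : HasDerivAt (fun x : ℝ => g (x * Real.exp x))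
      (((1 + w) * Real.exp w)⁻¹ * ((1 + z) * Real.exp z)) z := by
    have hz' : HasDerivAt (fun x : ℝ => x * Real.exp x) ((1 + z) * Real.exp z) z :=
      (hfd z).hasDerivAt
    have : z * Real.exp z = f w := hfw.symm
    exact HasDerivAt.comp z (this ▸ hgd.hasDerivAt) hz'
  have hphi : HasDerivAt φ (((1 + w) * Real.exp w)⁻¹ * ((1 + z) * Real.exp z)) z :=
    hcomp.congr_of_eventuallyEq hev
  convert hphi using 1
  have hez : Real.exp w = z * Real.exp z / w := by
    field_simp
    linarith [heq]
  rw [hez]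
  have hexz : Real.exp z ≠ 0 := Real.exp_ne_zero z
  field_simp

theorem stmt_10 (φ : ℝ → ℝ)
    (hφ : ∀ z : ℝ, z < -1 → φ z ∈ Set.Ioo (-1 : ℝ) 0 ∧ φ z * Real.exp (φ z) = z * Real.exp z)
    (a : ℝ) (ha : 0 < a)
    (G : ℝ → ℝ) (hG : ∀ z : ℝ, z < -1 → G z = (z ^ 2 - φ z ^ 2) / 2 + (1 + a) * (z - φ z)) :
    (∀ z : ℝ, z < -1 →
      HasDerivAt G ((z - φ z) / (z * (φ z + 1)) * ((z + 1) * (φ z + 1) + a)) z) ∧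
    (∀ z : ℝ, z < -1 → (deriv G z = 0 ↔ (z + 1) * (φ z + 1) + a = 0)) := by
  have key : ∀ z : ℝ, z < -1 →
      HasDerivAt G ((z - φ z) / (z * (φ z + 1)) * ((z + 1) * (φ z + 1) + a)) z := by
    intro z hz
    obtain ⟨hw, heq⟩ := hφ z hz
    have hw1 : (-1 : ℝ) < φ z := hw.1
    have hw0 : φ z < 0 := hw.2
    have hzne : z ≠ 0 := by linarith
    have h1w : φ z + 1 ≠ 0 := by linarith
    have h1w' : (1 : ℝ) + φ z ≠ 0 := by linarith
    have hden : z * (1 + φ z) ≠ 0 := mul_ne_zero hzne h1w'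
    have hphi := phi_deriv φ hφ z hz
    set D := (1 + z) * φ z / (z * (1 + φ z)) with hD
    have h1 : HasDerivAt (fun x => (x ^ 2 - φ x ^ 2) / 2 + (1 + a) * (x - φ x))
        ((2 * z - 2 * φ z * D) / 2 + (1 + a) * (1 - D)) z := by
      have ha1 : HasDerivAt (fun x : ℝ => x ^ 2) (2 * z) z := by
        simpa using hasDerivAt_pow 2 z
      have ha2 : HasDerivAt (fun x => φ x ^ 2) (2 * φ z * D) z := by
        simpa using hphi.fun_pow 2
      exact (((ha1.sub ha2).div_const 2).add
        (((hasDerivAt_id z).sub hphi).const_mul (1 + a)))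
    have hev : ∀ᶠ x in 𝓝 z, G x = (x ^ 2 - φ x ^ 2) / 2 + (1 + a) * (x - φ x) := by
      have h1' : ∀ᶠ x in 𝓝 z, x < -1 := Filter.Tendsto.eventually_lt_const hz tendsto_id
      filter_upwards [h1'] with x hx using hG x hx
    have h2 := h1.congr_of_eventuallyEq hev
    refine h2.congr_deriv (Eq.symm ?_)
    rw [hD]
    field_simp
    ring
  refine ⟨key, fun z hz => ?_⟩
  obtain ⟨hw, heq⟩ := hφ z hz
  have hw1 : (-1 : ℝ) < φ z := hw.1
  have hw0 : φ z < 0 := hw.2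
  rw [(key z hz).deriv]
  constructor
  · intro h
    rcases mul_eq_zero.1 h with h' | h'
    · exfalso
      have hnum : z - φ z < 0 := by linarith
      have hden : z * (φ z + 1) < 0 := mul_neg_of_neg_of_pos (by linarith) (by linarith)
      have := div_ne_zero (ne_of_lt hnum) (ne_of_lt hden)
      exact this h'
    · exact h'
  · intro h
    rw [h, mul_zero]
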